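/- For integers n ≥ 2 and 1 ≤ k ≤ n−1 with k even, the k-circulant digraph C_n(1,…,k) is (⌊(k+2)/4⌋, ⌊(k+2)/4⌋)-robust. -/
import Mathlib


/-- In-neighbor set of vertex `j` in the `k`-circulant digraph `C_n(1,…,k)`:
`K_j = {j-1, j-2, …, j-k}` (mod `n`). -/
def circInNbrs (n k : ℕ) (j : ZMod n) : Finset (ZMod n) :=
  (Finset.Icc 1 k).image fun a : ℕ => j - (a : ZMod n)

/-- `X^r_S = {i ∈ S : |K_i \ S| ≥ r}` in the `k`-circulant digraph. -/
def circXSet (n k r : ℕ) (S : Finset (ZMod n)) : Finset (ZMod n) :=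
  S.filter fun i => r ≤ ((circInNbrs n k i) \ S).card

/-- The `k`-circulant digraph on `n` nodes is `(r,s)`-robust: for every pair of
nonempty disjoint subsets `S1, S2` of the vertex set, `|X^r_{S1}| = |S1|`, or
`|X^r_{S2}| = |S2|`, or `|X^r_{S1}| + |X^r_{S2}| ≥ s`. -/
def circRSRobust (n k r s : ℕ) : Prop :=
  ∀ S1 S2 : Finset (ZMod n), S1.Nonempty → S2.Nonempty → Disjoint S1 S2 →
    (circXSet n k r S1).card = S1.card ∨ (circXSet n k r S2).card = S2.card ∨
      s ≤ (circXSet n k r S1).card + (circXSet n k r S2).card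

lemma natCast_injOn_zmod {n : ℕ} {a b : ℕ} (ha : a < n) (hb : b < n)
    (h : (a : ZMod n) = (b : ZMod n)) : a = b := by
  have := congrArg ZMod.val h
  rwa [ZMod.val_natCast, ZMod.val_natCast, Nat.mod_eq_of_lt ha,
    Nat.mod_eq_of_lt hb] at this

lemma circInNbrs_card (n k : ℕ) (hk : k < n) (j : ZMod n) :
    (circInNbrs n k j).card = k := by
  rw [circInNbrs, Finset.card_image_of_injOn, Nat.card_Icc]
  · omega
  · intro a ha b hb hab
    simp only [Finset.coe_Icc, Set.mem_Icc] at ha hb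
    have h2 : (a : ZMod n) = (b : ZMod n) := by
      have := sub_right_inj.mp hab
      exact this
    exact natCast_injOn_zmod (lt_of_le_of_lt ha.2 hk) (lt_of_le_of_lt hb.2 hk) h2

lemma circInNbrs_succ_subset (n k : ℕ) (v : ZMod n) :
    circInNbrs n k (v + 1) ⊆ insert v (circInNbrs n k v) := by
  intro x hx
  simp only [circInNbrs, Finset.mem_image, Finset.mem_Icc] at hx
  obtain ⟨a, ⟨ha1, hak⟩, rfl⟩ := hx
  rcases eq_or_lt_of_le ha1 with h | h
  · apply Finset.mem_insert.mpr
    left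
    rw [← h]
    push_cast
    ring
  · apply Finset.mem_insert.mpr
    right
    simp only [circInNbrs, Finset.mem_image, Finset.mem_Icc]
    refine ⟨a - 1, ⟨by omega, by omega⟩, ?_⟩
    have : ((a - 1 : ℕ) : ZMod n) = (a : ZMod n) - 1 := by
      have : a - 1 + 1 = a := by omega
      calc ((a - 1 : ℕ) : ZMod n) = ((a - 1 + 1 : ℕ) : ZMod n) - 1 := by
            push_cast; ring
        _ = (a : ZMod n) - 1 := by rw [this]
    rw [this]
    ring

/-- Main counting lemma: if some vertex `j0` has few in-neighbors in `S` and
some vertex `j1` has many, then `X^r_S` is large. -/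
lemma circXSet_large (n k r : ℕ) (hn : 2 ≤ n) (hkn : k < n)
    (S : Finset (ZMod n)) (j0 j1 : ZMod n) (hne : j0 ≠ j1)
    (h0 : ((circInNbrs n k j0) ∩ S).card < r)
    (h1 : k < ((circInNbrs n k j1) ∩ S).card + r) :
    k + 2 ≤ (circXSet n k r S).card + 2 * r := by
  haveI : NeZero n := ⟨by omega⟩
  set H : ℕ → ℕ := fun m => ((circInNbrs n k (j0 + (m : ZMod n))) ∩ S).card with hH
  set d : ℕ := (j1 - j0).val with hd
  have hdn : d < n := ZMod.val_lt _
  have hj0d : j0 + (d : ZMod n) = j1 := by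
    rw [hd, ZMod.natCast_val, ZMod.cast_id]
    ring
  -- step inequality
  have hstep : ∀ m : ℕ, H (m + 1) ≤ H m +
      (if (j0 + (m : ZMod n)) ∈ S then 1 else 0) := by
    intro m
    have hcast : j0 + ((m + 1 : ℕ) : ZMod n) = (j0 + (m : ZMod n)) + 1 := by
      push_cast; ring
    have hsub := circInNbrs_succ_subset n k (j0 + (m : ZMod n))
    by_cases hm : (j0 + (m : ZMod n)) ∈ S
    · simp only [hm, if_pos]
      have hsub2 : (circInNbrs n k (j0 + ((m + 1 : ℕ) : ZMod n))) ∩ S ⊆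
          insert (j0 + (m : ZMod n)) ((circInNbrs n k (j0 + (m : ZMod n))) ∩ S) := by
        rw [hcast]
        intro x hx
        rw [Finset.mem_inter] at hx
        rcases Finset.mem_insert.mp (hsub hx.1) with h | h
        · exact Finset.mem_insert.mpr (Or.inl h)
        · exact Finset.mem_insert.mpr (Or.inr (Finset.mem_inter.mpr ⟨h, hx.2⟩))
      calc H (m + 1) ≤ (insert (j0 + (m : ZMod n))
            ((circInNbrs n k (j0 + (m : ZMod n))) ∩ S)).card :=
            Finset.card_le_card hsub2
        _ ≤ H m + 1 := Finset.card_insert_le _ _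
    · simp only [hm, if_neg, not_false_iff, add_zero]
      apply Finset.card_le_card
      rw [hcast]
      intro x hx
      rw [Finset.mem_inter] at hx
      rcases Finset.mem_insert.mp (hsub hx.1) with h | h
      · exact absurd (h ▸ hx.2) hm
      · exact Finset.mem_inter.mpr ⟨h, hx.2⟩
  -- T : first time H exceeds k - r
  have hPd : k < H d + r := by
    rw [hH]
    simp only
    rw [hj0d]
    exact h1
  set P : ℕ → Prop := fun m => k < H m + r with hP
  have hex : ∃ m, P m := ⟨d, hPd⟩
  set T : ℕ := Nat.find hex with hT
  have hTd : T ≤ d := Nat.find_min' hex hPd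
  have hTspec : k < H T + r := Nat.find_spec hex
  have hTmin : ∀ m, m < T → H m + r ≤ k := by
    intro m hm
    have := Nat.find_min hex hm
    rw [hP] at this
    omega
  -- the up-step set
  set Q : ℕ → Prop := fun m => (j0 + (m : ZMod n)) ∈ S with hQ
  set F : Finset ℕ := (Finset.range T).filter (fun m => (j0 + (m : ZMod n)) ∈ S)
    with hF
  -- telescoping
  have htel : ∀ m : ℕ, H m ≤ H 0 +
      ((Finset.range m).filter (fun i : ℕ => (j0 + (i : ZMod n)) ∈ S)).card := by
    intro m
    induction m with
    | zero => simp
    | succ m ih =>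
      have h2 := hstep m
      rw [Finset.range_add_one, Finset.filter_insert]
      by_cases hm : (j0 + (m : ZMod n)) ∈ S
      · rw [if_pos hm, Finset.card_insert_of_notMem (by simp)]
        simp only [hm, if_pos] at h2
        omega
      · rw [if_neg hm]
        simp only [hm, if_neg, not_false_iff, add_zero] at h2
        omega
  have hH0 : H 0 < r := by
    have : H 0 = ((circInNbrs n k j0) ∩ S).card := by
      rw [hH]; norm_num
    omega
  have hFcard : k + 2 ≤ F.card + 2 * r := by
    have := htel T
    rw [← hF] at this
    omega
  -- F maps injectively into circXSet
  have himg : F.image (fun m : ℕ => j0 + (m : ZMod n)) ⊆ circXSet n k r S := by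
    intro x hx
    simp only [Finset.mem_image, hF, Finset.mem_filter, Finset.mem_range] at hx
    obtain ⟨m, ⟨hmT, hmS⟩, rfl⟩ := hx
    rw [circXSet, Finset.mem_filter]
    refine ⟨hmS, ?_⟩
    have hHm : H m + r ≤ k := hTmin m hmT
    have hcards := Finset.card_sdiff_add_card_inter
      (circInNbrs n k (j0 + (m : ZMod n))) S
    have hK := circInNbrs_card n k hkn (j0 + (m : ZMod n))
    rw [hK] at hcards
    rw [hH] at hHm
    simp only at hHm
    omega
  have hinj : Set.InjOn (fun m : ℕ => j0 + (m : ZMod n)) F := by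
    intro a ha b hb hab
    rw [Finset.mem_coe, hF, Finset.mem_filter, Finset.mem_range] at ha hb
    have h2 : (a : ZMod n) = (b : ZMod n) := add_left_cancel hab
    have han : a < n := by omega
    have hbn : b < n := by omega
    exact natCast_injOn_zmod han hbn h2
  have hcard2 : F.card ≤ (circXSet n k r S).card := by
    rw [← Finset.card_image_of_injOn hinj]
    exact Finset.card_le_card himg
  omega

/-- For even `k`, the `k`-circulant digraph `C_n(1,…,k)` is
`(⌊(k+2)/4⌋, ⌊(k+2)/4⌋)`-robust. -/
theorem circulant_even_k_rs_robust (n k : ℕ) (hn : 2 ≤ n) (hk1 : 1 ≤ k)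
    (hk2 : k ≤ n - 1) (hkeven : Even k) :
    circRSRobust n k ((k + 2) / 4) ((k + 2) / 4) := by
  set r : ℕ := (k + 2) / 4 with hr
  have h4r : 4 * r ≤ k + 2 := by
    have := Nat.div_mul_le_self (k + 2) 4
    omega
  have hkn : k < n := by omega
  intro S1 S2 hS1 hS2 hdis
  by_cases hX1 : (circXSet n k r S1).card = S1.card
  · exact Or.inl hX1
  by_cases hX2 : (circXSet n k r S2).card = S2.card
  · exact Or.inr (Or.inl hX2)
  refine Or.inr (Or.inr ?_)
  -- extract witnesses
  have hsub1 : circXSet n k r S1 ⊆ S1 := Finset.filter_subset _ _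
  have hsub2 : circXSet n k r S2 ⊆ S2 := Finset.filter_subset _ _
  obtain ⟨i1, hi1S, hi1X⟩ := Finset.exists_of_ssubset
    (hsub1.ssubset_of_ne (fun h => hX1 (by rw [h])))
  obtain ⟨i2, hi2S, hi2X⟩ := Finset.exists_of_ssubset
    (hsub2.ssubset_of_ne (fun h => hX2 (by rw [h])))
  have hi1 : ((circInNbrs n k i1) \ S1).card < r := by
    by_contra h
    exact hi1X (Finset.mem_filter.mpr ⟨hi1S, by omega⟩)
  have hi2 : ((circInNbrs n k i2) \ S2).card < r := by
    by_contra h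
    exact hi2X (Finset.mem_filter.mpr ⟨hi2S, by omega⟩)
  -- j0 := i1 has few in-neighbors in S2
  have h0 : ((circInNbrs n k i1) ∩ S2).card < r := by
    have hss : (circInNbrs n k i1) ∩ S2 ⊆ (circInNbrs n k i1) \ S1 := by
      intro x hx
      rw [Finset.mem_inter] at hx
      exact Finset.mem_sdiff.mpr ⟨hx.1, Finset.disjoint_right.mp hdis hx.2⟩
    exact lt_of_le_of_lt (Finset.card_le_card hss) hi1
  -- j1 := i2 has many in-neighbors in S2
  have h1 : k < ((circInNbrs n k i2) ∩ S2).card + r := by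
    have hcards := Finset.card_sdiff_add_card_inter (circInNbrs n k i2) S2
    have hK := circInNbrs_card n k hkn i2
    omega
  have hne : i1 ≠ i2 := fun h => Finset.disjoint_left.mp hdis hi1S (h ▸ hi2S)
  have hmain := circXSet_large n k r hn hkn S2 i1 i2 hne h0 h1
  omega
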